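/- For every natural number d ≥ 1, ∑_{j=0}^{d} C(10d, j) < 2^{5d}. -/

import Mathlib

open Finset Nat

-- (j+1)^j ≤ 3 * j^j  via reals
lemma aux0 (j : ℕ) : (j + 1) ^ j ≤ 3 * j ^ j := by
  rcases Nat.eq_zero_or_pos j with h | h
  · simp [h]
  have hj : (0:ℝ) < (j:ℝ) := by exact_mod_cast h
  have h1 : ((j:ℝ) + 1) ^ j ≤ 3 * (j:ℝ) ^ j := by
    have : (j:ℝ) + 1 = (j:ℝ) * (1 + 1/j) := by field_simp
    rw [this, mul_pow]
    have h2 : (1 + 1/(j:ℝ)) ^ j ≤ Real.exp 1 := by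
      have := Real.add_one_le_exp (1/(j:ℝ))
      calc (1 + 1/(j:ℝ)) ^ j ≤ (Real.exp (1/j)) ^ j := by
            apply pow_le_pow_left₀ (by positivity) (by linarith)
        _ = Real.exp 1 := by
            rw [← Real.exp_nat_mul]; congr 1; field_simp
    have h3 : Real.exp 1 ≤ 3 := by
      have := Real.exp_one_lt_d9; linarith
    calc (j:ℝ)^j * (1 + 1/(j:ℝ))^j ≤ (j:ℝ)^j * 3 :=
          mul_le_mul_of_nonneg_left (h2.trans h3) (by positivity)
      _ = 3 * (j:ℝ)^j := by ring
  exact_mod_cast (by push_cast at h1 ⊢; linarith : (((j+1)^j : ℕ) : ℝ) ≤ ((3 * j^j : ℕ) : ℝ))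

-- j^j ≤ 3^j * j!
lemma aux1 (j : ℕ) : j ^ j ≤ 3 ^ j * j ! := by
  induction j with
  | zero => simp
  | succ j ih =>
    have : (j+1)^(j+1) = (j+1) * (j+1)^j := by ring
    rw [this, Nat.factorial_succ]
    calc (j+1) * (j+1)^j ≤ (j+1) * (3 * j^j) := Nat.mul_le_mul_left _ (aux0 j)
      _ ≤ (j+1) * (3 * (3^j * j !)) := Nat.mul_le_mul_left _ (Nat.mul_le_mul_left _ ih)
      _ = 3 ^ (j+1) * ((j+1) * j !) := by ring

-- d^j ≤ j^j * C(d,j) for j ≤ d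
lemma aux2 : ∀ j d : ℕ, j ≤ d → d ^ j ≤ j ^ j * Nat.choose d j := by
  intro j
  induction j with
  | zero => intro d _; simp
  | succ j ih =>
    intro d hjd
    obtain ⟨e, rfl⟩ : ∃ e, d = e + 1 := ⟨d - 1, by omega⟩
    have hje : j ≤ e := by omega
    have key : (e+1) * Nat.choose e j = Nat.choose (e+1) (j+1) * (j+1) :=
      Nat.add_one_mul_choose_eq e j
    have ih' := ih e hje
    -- want (e+1)^(j+1) ≤ (j+1)^(j+1) * C(e+1, j+1)
    have h1 : (e+1)^(j+1) * j^j ≤ (j+1)^(j+1) * Nat.choose (e+1) (j+1) * j^j := by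
      have hd : (e+1) * j ≤ (j+1) * e := by nlinarith [hje]
      have h2 : ((e+1) * j)^j ≤ ((j+1) * e)^j := Nat.pow_le_pow_left hd j
      calc (e+1)^(j+1) * j^j = (e+1) * ((e+1)^j * j^j) := by ring
        _ = (e+1) * ((e+1)*j)^j := by rw [mul_pow]
        _ ≤ (e+1) * ((j+1)*e)^j := Nat.mul_le_mul_left _ h2
        _ = (j+1)^j * ((e+1) * e^j) := by rw [mul_pow]; ring
        _ ≤ (j+1)^j * ((e+1) * (j^j * Nat.choose e j)) := by
            exact Nat.mul_le_mul_left _ (Nat.mul_le_mul_left _ ih')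
        _ = (j+1)^j * ((e+1) * Nat.choose e j) * j^j := by ring
        _ = (j+1)^j * (Nat.choose (e+1) (j+1) * (j+1)) * j^j := by rw [key]
        _ = (j+1)^(j+1) * Nat.choose (e+1) (j+1) * j^j := by ring
    rcases Nat.eq_zero_or_pos j with h0 | h0
    · subst h0; simpa using h1
    · exact Nat.le_of_mul_le_mul_right h1 (Nat.pow_pos (n := j) h0)

theorem stmt_14 (d : ℕ) (hd : 1 ≤ d) :
    ∑ j ∈ Finset.range (d + 1), Nat.choose (10 * d) j < 2 ^ (5 * d) := by
  have term : ∀ j ≤ d, Nat.choose (10 * d) j ≤ 30 ^ j * Nat.choose d j := by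
    intro j hj
    have h1 : Nat.choose (10*d) j * (j ! * j^j) ≤ 30^j * Nat.choose d j * (j ! * j^j) := by
      calc Nat.choose (10*d) j * (j ! * j^j)
          = (j ! * Nat.choose (10*d) j) * j^j := by ring
        _ = Nat.descFactorial (10*d) j * j^j := by
            rw [Nat.descFactorial_eq_factorial_mul_choose]
        _ ≤ (10*d)^j * j^j := Nat.mul_le_mul_right _ (Nat.descFactorial_le_pow _ _)
        _ = 10^j * j^j * d^j := by rw [mul_pow]; ring
        _ ≤ 10^j * j^j * (j^j * Nat.choose d j) := Nat.mul_le_mul_left _ (aux2 j d hj)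
        _ ≤ 10^j * (3^j * j !) * (j^j * Nat.choose d j) :=
            Nat.mul_le_mul_right _ (Nat.mul_le_mul_left _ (aux1 j))
        _ = (10*3)^j * Nat.choose d j * (j ! * j^j) := by rw [mul_pow]; ring
        _ = 30^j * Nat.choose d j * (j ! * j^j) := by norm_num
    have hjj : 0 < j ^ j := by
      rcases Nat.eq_zero_or_pos j with h|h
      · simp [h]
      · exact Nat.pow_pos (n := j) h
    exact Nat.le_of_mul_le_mul_right h1 (Nat.mul_pos j.factorial_pos hjj)
  have hsum : ∑ j ∈ Finset.range (d + 1), Nat.choose (10 * d) j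
      ≤ ∑ j ∈ Finset.range (d + 1), 30 ^ j * Nat.choose d j := by
    apply Finset.sum_le_sum
    intro j hj
    exact term j (Nat.lt_succ_iff.mp (Finset.mem_range.mp hj))
  have hbin : ∑ j ∈ Finset.range (d + 1), 30 ^ j * Nat.choose d j = 31 ^ d := by
    have h := add_pow 30 1 d (R := ℕ)
    norm_num at h
    omega
  have h31 : (31:ℕ) ^ d < 32 ^ d := Nat.pow_lt_pow_left (by norm_num) (by omega)
  have h32 : (32:ℕ) ^ d = 2 ^ (5 * d) := by
    rw [pow_mul]; norm_num
  omega
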